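/- Let A, B, C be locally small categories (hom-sets in Type u), let g : A ⥤ B, h : B ⥤ C, f : A ⥤ C be functors, and let φ : f ⟶ g ⋙ h be a natural transformation. Define B(g,1) : B ⥤ (Aᵒᵖ ⥤ Type u) by b ↦ (a ↦ Hom_B(g.obj a, b)), define C(f,1) : C ⥤ (Aᵒᵖ ⥤ Type u) by c ↦ (a ↦ Hom_C(f.obj a, c)), and define φ' : B(g,1) ⟶ h ⋙ C(f,1) by ((φ'.app b).app a)(β) = φ.app a ≫ h.map β for β : g.obj a ⟶ b. Then φ exhibits h as a left Kan extension of f along g if and only if φ' exhibits h as a left lifting of B(g,1) along C(f,1). -/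

import Mathlib

open CategoryTheory Opposite

universe u v₁ v₂ v₃ u₁ u₂ u₃ ux vx

section HomFunctor

variable {A : Type u₁} {B : Type u₂} {C : Type u₃}
variable [Category.{u} A] [Category.{u} B] [Category.{u} C]

/-- The functor `B(g,1) : B ⥤ (Aᵒᵖ ⥤ Type u)`, `b ↦ (a ↦ Hom_B(g.obj a, b))`. -/
def homFunctor (g : A ⥤ B) : B ⥤ (Aᵒᵖ ⥤ Type u) where
  obj b :=
    { obj := fun a => (g.obj a.unop ⟶ b)
      map := fun m => TypeCat.ofHom fun β => g.map m.unop ≫ β }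
  map k := { app := fun a => TypeCat.ofHom fun β => β ≫ k }

/-- The 2-cell `φ' : B(g,1) ⟶ h ⋙ C(f,1)` associated to `φ : f ⟶ g ⋙ h`, with
components `β ↦ φ.app a ≫ h.map β`. -/
def primeTrans (g : A ⥤ B) (h : B ⥤ C) (f : A ⥤ C) (φ : f ⟶ g ⋙ h) :
    homFunctor g ⟶ h ⋙ homFunctor f where
  app b :=
    { app := fun a => TypeCat.ofHom fun β => φ.app a.unop ≫ h.map β
      naturality := by
        intro a a' m
        ext β
        have hn := φ.naturality m.unop
        dsimp [homFunctor] at *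
        change g.obj a.unop ⟶ b at β
        change φ.app a'.unop ≫ h.map (g.map m.unop ≫ (β : g.obj a.unop ⟶ b)) =
          f.map m.unop ≫ φ.app a.unop ≫ h.map (β : g.obj a.unop ⟶ b)
        rw [Functor.map_comp, ← Category.assoc, ← hn, Category.assoc] }
  naturality := by
    intro b b' k
    ext a β
    dsimp [homFunctor]
    change g.obj a.unop ⟶ b at β
    change φ.app a.unop ≫ h.map ((β : g.obj a.unop ⟶ b) ≫ k) =
      (φ.app a.unop ≫ h.map (β : g.obj a.unop ⟶ b)) ≫ h.map k
    rw [Functor.map_comp, Category.assoc]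

end HomFunctor

section Liftings

variable {B : Type u₁} {C : Type u₂} {P : Type u₃}
variable [Category.{v₁} B] [Category.{v₂} C] [Category.{v₃} P]

/-- `ψ : s ⟶ h ⋙ t` exhibits `h` as a left lifting of `s` along `t` when for every
`k : B ⥤ C` pasting with `ψ` is a bijection from 2-cells `h ⟶ k` to 2-cells
`s ⟶ k ⋙ t`. -/
def ExhibitsLeftLifting (s : B ⥤ P) (h : B ⥤ C) (t : C ⥤ P) (ψ : s ⟶ h ⋙ t) : Prop :=
  ∀ k : B ⥤ C, Function.Bijective fun δ : h ⟶ k => ψ ≫ Functor.whiskerRight δ t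

end Liftings

section Aux

open CategoryTheory.Limits

lemma isLeftKanExtension_iff_bijective {C : Type*} {D : Type*} {H : Type*}
    [Category C] [Category D] [Category H]
    (F' : D ⥤ H) (L : C ⥤ D) (F : C ⥤ H) (α : F ⟶ L ⋙ F') :
    F'.IsLeftKanExtension α ↔
      ∀ G : D ⥤ H, Function.Bijective (fun β : F' ⟶ G => α ≫ Functor.whiskerLeft L β) := by
  constructor
  · intro _ G
    exact (Functor.homEquivOfIsLeftKanExtension F' α G).bijective
  · intro hbij
    refine ⟨⟨IsInitial.ofUniqueHom (fun Y => StructuredArrow.homMk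
      ((hbij Y.right).2 Y.hom).choose ?_) ?_⟩⟩
    · exact ((hbij Y.right).2 Y.hom).choose_spec
    · intro Y m
      ext : 1
      apply (hbij Y.right).1
      simp only [StructuredArrow.homMk_right]
      exact (StructuredArrow.w m).trans ((hbij Y.right).2 Y.hom).choose_spec.symm

variable {A : Type u₁} {B : Type u₂} {C : Type u₃}
variable [Category.{u} A] [Category.{u} B] [Category.{u} C]

/-- The Yoneda-style bijection `(f ⟶ g ⋙ k) ≃ (B(g,1) ⟶ k ⋙ C(f,1))`. -/
def transEquiv (g : A ⥤ B) (f : A ⥤ C) (k : B ⥤ C) :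
    (f ⟶ g ⋙ k) ≃ (homFunctor g ⟶ k ⋙ homFunctor f) where
  toFun γ := primeTrans g k f γ
  invFun Ψ :=
    { app := fun a => (Ψ.app (g.obj a)).app (op a) (𝟙 (g.obj a) : ((homFunctor g).obj (g.obj a)).obj (op a))
      naturality := by
        intro a a' m
        have h1 : (show f.obj a ⟶ k.obj (g.obj a') from (Ψ.app (g.obj a')).app (op a)
            ((g.map m ≫ 𝟙 (g.obj a') : g.obj a ⟶ g.obj a') : ((homFunctor g).obj (g.obj a')).obj (op a)))
            = f.map m ≫ (show f.obj a' ⟶ k.obj (g.obj a') from (Ψ.app (g.obj a')).app (op a')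
            (𝟙 (g.obj a') : ((homFunctor g).obj (g.obj a')).obj (op a'))) :=
          types_congr_hom ((Ψ.app (g.obj a')).naturality m.op) (𝟙 (g.obj a') : ((homFunctor g).obj (g.obj a')).obj (op a'))
        have h2 : (show f.obj a ⟶ k.obj (g.obj a') from (Ψ.app (g.obj a')).app (op a)
            ((𝟙 (g.obj a) ≫ g.map m : g.obj a ⟶ g.obj a') : ((homFunctor g).obj (g.obj a')).obj (op a)))
            = (show f.obj a ⟶ k.obj (g.obj a) from (Ψ.app (g.obj a)).app (op a)
            (𝟙 (g.obj a) : ((homFunctor g).obj (g.obj a)).obj (op a))) ≫ k.map (g.map m) :=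
          types_congr_hom (congr_app (Ψ.naturality (g.map m)) (op a)) (𝟙 (g.obj a) : ((homFunctor g).obj (g.obj a)).obj (op a))
        simp only [Category.comp_id, Category.id_comp] at h1 h2
        change f.map m ≫ (show f.obj a' ⟶ k.obj (g.obj a') from (Ψ.app (g.obj a')).app (op a')
            (𝟙 (g.obj a') : ((homFunctor g).obj (g.obj a')).obj (op a'))) =
          (show f.obj a ⟶ k.obj (g.obj a) from (Ψ.app (g.obj a)).app (op a)
            (𝟙 (g.obj a) : ((homFunctor g).obj (g.obj a)).obj (op a))) ≫ k.map (g.map m)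
        rw [← h1, h2] }
  left_inv γ := by
    ext a
    dsimp [primeTrans]
    change γ.app a ≫ k.map (𝟙 _) = _
    simp
  right_inv Ψ := by
    ext b a β
    have h2 : (show f.obj a.unop ⟶ k.obj b from (Ψ.app b).app a
        ((𝟙 (g.obj a.unop) ≫ (show g.obj a.unop ⟶ b from β) : g.obj a.unop ⟶ b) : ((homFunctor g).obj b).obj a))
        = (show f.obj a.unop ⟶ k.obj (g.obj a.unop) from (Ψ.app (g.obj a.unop)).app a
        (𝟙 (g.obj a.unop) : ((homFunctor g).obj (g.obj a.unop)).obj a)) ≫ k.map (show g.obj a.unop ⟶ b from β) :=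
      types_congr_hom (congr_app (Ψ.naturality β) a) (𝟙 (g.obj a.unop) : ((homFunctor g).obj (g.obj a.unop)).obj a)
    simp only [Category.id_comp] at h2
    change (show f.obj a.unop ⟶ k.obj (g.obj a.unop) from (Ψ.app (g.obj a.unop)).app (op a.unop)
        (𝟙 (g.obj a.unop) : ((homFunctor g).obj (g.obj a.unop)).obj (op a.unop))) ≫
        k.map (show g.obj a.unop ⟶ b from β) = (show f.obj a.unop ⟶ k.obj b from (Ψ.app b).app a β)
    rw [← h2]
    exact congrArg (ConcreteCategory.hom ((Ψ.app b).app a)) (Category.id_comp (show g.obj a.unop ⟶ b from β))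

lemma primeTrans_whiskerRight (g : A ⥤ B) (h : B ⥤ C) (f : A ⥤ C) (φ : f ⟶ g ⋙ h)
    (k : B ⥤ C) (δ : h ⟶ k) :
    primeTrans g h f φ ≫ Functor.whiskerRight δ (homFunctor f)
      = transEquiv g f k (φ ≫ Functor.whiskerLeft g δ) := by
  ext b a β
  dsimp [primeTrans, homFunctor, transEquiv]
  change (φ.app a.unop ≫ h.map (show g.obj a.unop ⟶ b from β)) ≫ δ.app b =
    (φ.app a.unop ≫ δ.app (g.obj a.unop)) ≫ k.map (show g.obj a.unop ⟶ b from β)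
  rw [Category.assoc, Category.assoc, δ.naturality]

end Aux

/-- `φ : f ⟶ g ⋙ h` exhibits `h` as a left Kan extension of `f` along
`g` if and only if `φ' : B(g,1) ⟶ h ⋙ C(f,1)` exhibits `h` as a left lifting of `B(g,1)`
along `C(f,1)`. -/
theorem stmt15 {A : Type u₁} {B : Type u₂} {C : Type u₃}
    [Category.{u} A] [Category.{u} B] [Category.{u} C]
    (g : A ⥤ B) (h : B ⥤ C) (f : A ⥤ C) (φ : f ⟶ g ⋙ h) :
    h.IsLeftKanExtension φ ↔
      ExhibitsLeftLifting (homFunctor g) h (homFunctor f) (primeTrans g h f φ) := by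
  rw [isLeftKanExtension_iff_bijective]
  unfold ExhibitsLeftLifting
  apply forall_congr'
  intro k
  have hcomp : (fun δ : h ⟶ k => primeTrans g h f φ ≫ Functor.whiskerRight δ (homFunctor f))
      = (transEquiv g f k) ∘ (fun δ : h ⟶ k => φ ≫ Functor.whiskerLeft g δ) := by
    funext δ
    exact primeTrans_whiskerRight g h f φ k δ
  rw [hcomp]
  exact ((transEquiv g f k).comp_bijective _).symm
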